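/- Let G be a discrete finitely generated group, Σ a finite alphabet, x ∈ Σ^G a Toeplitz array, and let (Γ_n)_{n≥0} be a period structure of x. Then there is an almost 1-1 factor map π from the Toeplitz system (Ω_G(x), G) onto the subodometer ←G = lim_{←n}(G/Γ_n, π_n) satisfying π^{-1}({e}) = {x}, where e ∈ ←G is the sequence of identity cosets; consequently ←G is the maximal equicontinuous factor of (Ω_G(x), G). -/

import Mathlib

open Pointwise MeasureTheory

/-- Compatibility condition defining the inverse limit `lim_{←i} (G/Γᵢ, πᵢ)`:
a sequence of cosets is compatible if any representative of the `(i+1)`-th coordinate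
also represents the `i`-th coordinate. -/
def Compat {G : Type*} [Group G] (Γ : ℕ → Subgroup G) (x : ∀ i, G ⧸ Γ i) : Prop :=
  ∀ (i : ℕ) (g : G),
    (QuotientGroup.mk g : G ⧸ Γ (i + 1)) = x (i + 1) →
    (QuotientGroup.mk g : G ⧸ Γ i) = x i

/-- The subodometer `←G = lim_{←i} (G/Γᵢ, πᵢ)` associated to a sequence of subgroups. -/
def Subodometer {G : Type*} [Group G] (Γ : ℕ → Subgroup G) : Type _ :=
  { x : ∀ i, G ⧸ Γ i // Compat Γ x }

/-- Topology of the subodometer: subspace topology of the product of the (discrete)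
coset spaces. -/
instance {G : Type*} [Group G] (Γ : ℕ → Subgroup G) [TopologicalSpace G] :
    TopologicalSpace (Subodometer Γ) :=
  instTopologicalSpaceSubtype

lemma compat_smul {G : Type*} [Group G] (Γ : ℕ → Subgroup G) (g : G) (x : ∀ i, G ⧸ Γ i)
    (hx : Compat Γ x) : Compat Γ (fun i => g • x i) := by
  intro i h hh
  change (QuotientGroup.mk h : G ⧸ Γ (i + 1)) = g • x (i + 1) at hh
  show (QuotientGroup.mk h : G ⧸ Γ i) = g • x i
  obtain ⟨a, ha⟩ := QuotientGroup.mk_surjective (x (i + 1))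
  have h1 : (QuotientGroup.mk (g * a) : G ⧸ Γ (i + 1)) = g • x (i + 1) := by
    rw [← ha]; rfl
  rw [← h1] at hh
  have h2 : (QuotientGroup.mk (g⁻¹ * h) : G ⧸ Γ (i + 1)) = QuotientGroup.mk a := by
    rw [QuotientGroup.eq] at hh ⊢
    simpa [mul_assoc] using hh
  have h3 := hx i _ (h2.trans ha)
  have h4 : (QuotientGroup.mk (g * (g⁻¹ * h)) : G ⧸ Γ i) = g • x i := by
    rw [show (QuotientGroup.mk (g * (g⁻¹ * h)) : G ⧸ Γ i)
        = g • (QuotientGroup.mk (g⁻¹ * h) : G ⧸ Γ i) from rfl, h3]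
  simpa [mul_assoc] using h4

/-- The action of `G` on the subodometer by coordinatewise left multiplication. -/
instance {G : Type*} [Group G] (Γ : ℕ → Subgroup G) : MulAction G (Subodometer Γ) where
  smul g x := ⟨fun i => g • x.1 i, compat_smul Γ g x.1 x.2⟩
  one_smul x := Subtype.ext (funext fun i => one_smul G (x.1 i))
  mul_smul g h x := Subtype.ext (funext fun i => mul_smul g h (x.1 i))

/-- The distinguished point `e` of the subodometer: the sequence of cosets of the
neutral element. -/
def odoE {G : Type*} [Group G] (Γ : ℕ → Subgroup G) (hΓ : ∀ i, Γ (i + 1) ≤ Γ i) :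
    Subodometer Γ :=
  ⟨fun i => QuotientGroup.mk 1, by
    intro i g hg
    rw [QuotientGroup.eq] at hg ⊢
    exact hΓ i hg⟩

/-- The canonical map `τ : G → ←G`, `τ(g) = (gΓᵢ)ᵢ`. -/
def odoTau {G : Type*} [Group G] (Γ : ℕ → Subgroup G) (hΓ : ∀ i, Γ (i + 1) ≤ Γ i) (g : G) :
    Subodometer Γ :=
  ⟨fun i => QuotientGroup.mk g, by
    intro i h hh
    rw [QuotientGroup.eq] at hh ⊢
    exact hΓ i hh⟩

/-- A factor map between two `G`-systems: a continuous surjection commuting with the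
`G`-actions. -/
def IsFactorMap (G : Type*) {X Y : Type*} [Group G] [TopologicalSpace X] [TopologicalSpace Y]
    [MulAction G X] [MulAction G Y] (π : X → Y) : Prop :=
  Continuous π ∧ Function.Surjective π ∧ ∀ (g : G) (x : X), π (g • x) = g • π x

/-- The (left) shift action of `G` on `K^G`: `(γ • x) g = x (g γ)`. -/
instance shiftMulAction (G K : Type*) [Group G] : MulAction G (G → K) where
  smul γ x := fun g => x (g * γ)
  one_smul x := funext fun g => congrArg x (mul_one g)
  mul_smul γ δ x := funext fun g => (congrArg x (mul_assoc g γ δ)).symm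

/-- `Per(x, Γ, σ) = {g ∈ G : x (g γ) = σ for all γ ∈ Γ}`. -/
def PerSet {G A : Type*} [Group G] (x : G → A) (Γ : Subgroup G) (σ : A) : Set G :=
  {g : G | ∀ γ ∈ Γ, x (g * γ) = σ}

/-- `Per(x, Γ) = ⋃_σ Per(x, Γ, σ)`. -/
def Per {G A : Type*} [Group G] (x : G → A) (Γ : Subgroup G) : Set G :=
  ⋃ σ : A, PerSet x Γ σ

/-- `x` is a `G`-Toeplitz array if every `g ∈ G` belongs to `Per(x, Γ)` for some
finite-index subgroup `Γ`. -/
def IsToeplitz {G A : Type*} [Group G] (x : G → A) : Prop :=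
  ∀ g : G, ∃ Γ : Subgroup G, Γ.FiniteIndex ∧ g ∈ Per x Γ

/-- `Γ` is an essential group of periods of `x`: every `g ∈ G` with
`Per(x, Γ, σ) ⊆ Per(g • x, Γ, σ)` for all `σ` belongs to `Γ`. -/
def IsEssentialPeriodGroup {G A : Type*} [Group G] (x : G → A) (Γ : Subgroup G) : Prop :=
  ∀ g : G, (∀ σ : A, PerSet x Γ σ ⊆ PerSet (g • x) Γ σ) → g ∈ Γ

/-- `Ω_G(x)`: the closure of the `G`-orbit of `x` in `A^G`. -/
def OmegaG (G : Type*) {A : Type*} [Group G] [TopologicalSpace A] (x : G → A) : Set (G → A) :=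
  closure (Set.range fun g : G => g • x)

lemma smul_mem_omegaG (G : Type*) {A : Type*} [Group G] [TopologicalSpace A] {x z : G → A}
    (g : G) (hz : z ∈ OmegaG G x) : g • z ∈ OmegaG G x := by
  unfold OmegaG at hz ⊢
  have hc : Continuous fun w : G → A => g • w := continuous_pi fun h => continuous_apply (h * g)
  have himg : (fun w : G → A => g • w) '' (Set.range fun h : G => h • x)
      = Set.range fun h : G => h • x := by
    ext w; constructor
    · rintro ⟨_, ⟨h, rfl⟩, rfl⟩
      refine ⟨g * h, ?_⟩
      show (g * h) • x = g • (h • x)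
      rw [mul_smul]
    · rintro ⟨h, rfl⟩
      refine ⟨(g⁻¹ * h) • x, ⟨g⁻¹ * h, rfl⟩, ?_⟩
      show g • ((g⁻¹ * h) • x) = h • x
      rw [← mul_smul, mul_inv_cancel_left]
  have h1 : g • z ∈ (fun w : G → A => g • w) '' closure (Set.range fun h : G => h • x) :=
    ⟨z, hz, rfl⟩
  have h2 := image_closure_subset_closure_image (f := fun w : G → A => g • w)
    (s := Set.range fun h : G => h • x) hc
  rw [himg] at h2
  exact h2 h1

lemma self_mem_omegaG (G : Type*) {A : Type*} [Group G] [TopologicalSpace A] (x : G → A) :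
    x ∈ OmegaG G x :=
  subset_closure ⟨1, one_smul G x⟩

/-- The subshift `Ω_G(x)` as a topological dynamical system. -/
def OmegaSub (G : Type*) {A : Type*} [Group G] [TopologicalSpace A] (x : G → A) : Type _ :=
  { z : G → A // z ∈ OmegaG G x }

instance (G : Type*) {A : Type*} [Group G] [TopologicalSpace A] (x : G → A) :
    TopologicalSpace (OmegaSub G x) :=
  instTopologicalSpaceSubtype

instance (G : Type*) {A : Type*} [Group G] [TopologicalSpace A] (x : G → A) :
    MulAction G (OmegaSub G x) where
  smul g z := ⟨g • z.1, smul_mem_omegaG G g z.2⟩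
  one_smul z := Subtype.ext (one_smul G z.1)
  mul_smul a b z := Subtype.ext (mul_smul a b z.1)

/-- An equicontinuous `G`-system on a metric space `Y`. -/
def IsEquicontinuousSystem (G Y : Type*) [Group G] [PseudoMetricSpace Y] [MulAction G Y] :
    Prop :=
  ∀ ε : ℝ, 0 < ε → ∃ δ : ℝ, 0 < δ ∧
    ∀ y z : Y, dist y z < δ → ∀ g : G, dist (g • y) (g • z) < ε


/-! ### Auxiliary development -/

/-- `S(x, Δ, w)`: the set of `h ∈ G` such that `w` agrees with `h • x` on the
`Δ`-periodic part of `x`. -/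
def Sset {G A : Type*} [Group G] (x : G → A) (Δ : Subgroup G) (w : G → A) : Set G :=
  {h : G | ∀ σ : A, ∀ g ∈ PerSet x Δ σ, ∀ γ ∈ Δ, w (g * γ * h) = σ}

section AuxLemmas

variable {G A : Type*} [Group G]

lemma perSet_mul_mem {x : G → A} {Δ : Subgroup G} {g γ : G} {σ : A}
    (hg : g ∈ PerSet x Δ σ) (hγ : γ ∈ Δ) : g * γ ∈ PerSet x Δ σ := by
  intro δ hδ
  have := hg (γ * δ) (mul_mem hγ hδ)
  rwa [← mul_assoc] at this

lemma perSet_anti {x : G → A} {Δ Δ' : Subgroup G} (h : Δ' ≤ Δ) {σ : A} :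
    PerSet x Δ σ ⊆ PerSet x Δ' σ := fun _ hg γ hγ => hg γ (h hγ)

lemma mem_sset_gamma {x : G → A} {Δ : Subgroup G} {w : G → A} {h γ : G}
    (hγ : γ ∈ Δ) (hh : h ∈ Sset x Δ w) : γ * h ∈ Sset x Δ w := by
  intro σ g hg δ hδ
  have := hh σ g hg (δ * γ) (mul_mem hδ hγ)
  rwa [show g * (δ * γ) * h = g * δ * (γ * h) by group] at this

lemma sset_smul {x : G → A} {Δ : Subgroup G} {w : G → A} {u h : G} :
    h ∈ Sset x Δ (u • w) ↔ h * u ∈ Sset x Δ w := by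
  constructor <;> intro hh σ g hg γ hγ
  · have : w (g * γ * h * u) = σ := hh σ g hg γ hγ
    rwa [← mul_assoc]
  · have := hh σ g hg γ hγ
    show w (g * γ * h * u) = σ
    rwa [mul_assoc]

lemma sset_self_sub {x : G → A} {Δ : Subgroup G} {γ : G} (hγ : γ ∈ Δ) :
    γ ∈ Sset x Δ x := by
  intro σ g hg δ hδ
  have := hg (δ * γ) (mul_mem hδ hγ)
  rwa [← mul_assoc] at this

lemma sset_self_eq {x : G → A} {Δ : Subgroup G} (hess : IsEssentialPeriodGroup x Δ) :
    Sset x Δ x = (Δ : Set G) := by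
  ext h
  refine ⟨fun hh => hess h fun σ g hg γ hγ => ?_, fun hh => sset_self_sub hh⟩
  show x (g * γ * h) = σ
  exact hh σ g hg γ hγ

lemma sset_anti {x : G → A} {Δ Δ' : Subgroup G} (hle : Δ' ≤ Δ) {w : G → A} :
    Sset x Δ' w ⊆ Sset x Δ w := by
  intro h hh σ g hg γ hγ
  have := hh σ (g * γ) (perSet_anti hle (perSet_mul_mem hg hγ)) 1 (one_mem _)
  rwa [mul_one] at this

/-- Membership of a fixed element in the `S`-set is a closed condition on `w`. -/
lemma isClosed_sset_mem [TopologicalSpace A] [DiscreteTopology A]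
    (x : G → A) (Δ : Subgroup G) (a : G) :
    IsClosed {w : G → A | a ∈ Sset x Δ w} := by
  have : {w : G → A | a ∈ Sset x Δ w} =
      ⋂ (σ : A) (g : G) (_ : g ∈ PerSet x Δ σ) (γ : G) (_ : γ ∈ Δ),
        (fun w : G → A => w (g * γ * a)) ⁻¹' {σ} := by
    ext w
    simp only [Set.mem_setOf_eq, Set.mem_iInter, Set.mem_preimage, Set.mem_singleton_iff]
    rfl
  rw [this]
  exact isClosed_iInter fun σ => isClosed_iInter fun g => isClosed_iInter fun _ =>
    isClosed_iInter fun γ => isClosed_iInter fun _ =>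
      isClosed_singleton.preimage (continuous_apply _)

lemma sset_out_mem {x : G → A} {Δ : Subgroup G} {w : G → A} {a : G}
    (ha : a ∈ Sset x Δ w) :
    ((QuotientGroup.mk a⁻¹ : G ⧸ Δ).out)⁻¹ ∈ Sset x Δ w := by
  set b := (QuotientGroup.mk a⁻¹ : G ⧸ Δ).out with hb
  have h1 : (QuotientGroup.mk b : G ⧸ Δ) = QuotientGroup.mk a⁻¹ := QuotientGroup.out_eq' _
  have h2 : b⁻¹ * a⁻¹ ∈ Δ := QuotientGroup.eq.mp h1
  have h3 : b⁻¹ = (b⁻¹ * a⁻¹) * a := by group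
  rw [h3]
  exact mem_sset_gamma h2 ha

/-- Nonemptiness of the `S`-set for every point of the orbit closure. -/
lemma sset_nonempty [TopologicalSpace A] [DiscreteTopology A]
    {x : G → A} {Δ : Subgroup G} (hfin : Δ.FiniteIndex)
    (hess : IsEssentialPeriodGroup x Δ) {z : G → A} (hz : z ∈ OmegaG G x) :
    (Sset x Δ z).Nonempty := by
  haveI : Finite (G ⧸ Δ) := Nat.finite_of_card_ne_zero hfin.index_ne_zero
  have hclosed : IsClosed (⋃ q : G ⧸ Δ, {w : G → A | (q.out)⁻¹ ∈ Sset x Δ w}) :=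
    isClosed_iUnion_of_finite fun q => isClosed_sset_mem x Δ _
  have hsub : (Set.range fun u : G => u • x) ⊆
      ⋃ q : G ⧸ Δ, {w : G → A | (q.out)⁻¹ ∈ Sset x Δ w} := by
    rintro w ⟨u, rfl⟩
    refine Set.mem_iUnion.2 ⟨QuotientGroup.mk u, ?_⟩
    show ((QuotientGroup.mk u : G ⧸ Δ).out)⁻¹ ∈ Sset x Δ (u • x)
    rw [sset_smul]
    have h1 : (QuotientGroup.mk ((QuotientGroup.mk u : G ⧸ Δ).out) : G ⧸ Δ) =
        QuotientGroup.mk u := QuotientGroup.out_eq' _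
    exact sset_self_sub (QuotientGroup.eq.mp h1)
  obtain ⟨q, hq⟩ := Set.mem_iUnion.mp (closure_minimal hsub hclosed hz)
  exact ⟨_, hq⟩

lemma per_anti {x : G → A} {Δ Δ' : Subgroup G} (h : Δ' ≤ Δ) :
    Per x Δ ⊆ Per x Δ' := by
  intro g hg
  obtain ⟨σ, hσ⟩ := Set.mem_iUnion.mp hg
  exact Set.mem_iUnion.2 ⟨σ, perSet_anti h hσ⟩

/-- Every point of the orbit closure of a Toeplitz array has `x` in its own orbit
closure (minimality, in the form we need). -/
lemma reach [TopologicalSpace A] [DiscreteTopology A]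
    {x : G → A} {Γ : ℕ → Subgroup G} (hdec : ∀ n, Γ (n + 1) ≤ Γ n)
    (hfin : ∀ n, (Γ n).FiniteIndex) (hess : ∀ n, IsEssentialPeriodGroup x (Γ n))
    (hcover : (⋃ n, Per x (Γ n)) = Set.univ) {z : G → A} (hz : z ∈ OmegaG G x) :
    x ∈ closure (Set.range fun u : G => u • z) := by
  have hΓle : ∀ {n m : ℕ}, n ≤ m → Γ m ≤ Γ n := fun {n m} h =>
    antitone_nat_of_succ_le hdec h
  rw [mem_closure_iff]
  intro O hO hxO
  obtain ⟨I, V, hV, hsub⟩ := isOpen_pi_iff.mp hO x hxO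
  have hex : ∀ g : G, ∃ n, g ∈ Per x (Γ n) := fun g =>
    Set.mem_iUnion.mp (Set.eq_univ_iff_forall.mp hcover g)
  choose f hf using hex
  set N := I.sup f with hN
  obtain ⟨h, hh⟩ := sset_nonempty (hfin N) (hess N) hz
  refine ⟨h • z, hsub ?_, ⟨h, rfl⟩⟩
  intro g hg
  have hgN : g ∈ Per x (Γ N) := per_anti (hΓle (Finset.le_sup hg)) (hf g)
  obtain ⟨σ, hσ⟩ := Set.mem_iUnion.mp hgN
  have hxg : x g = σ := by have := hσ 1 (one_mem _); rwa [mul_one] at this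
  have hzg : (h • z) g = σ := by
    have := hh σ g hσ 1 (one_mem _)
    rw [mul_one] at this
    exact this
  rw [hzg, ← hxg]
  exact (hV g hg).2

/-- Key uniqueness: two elements of the `S`-set of a point of the orbit closure lie
in the same right coset of `Δ`. -/
lemma sset_unique [TopologicalSpace A] [DiscreteTopology A]
    {x : G → A} {Γ : ℕ → Subgroup G} (hdec : ∀ n, Γ (n + 1) ≤ Γ n)
    (hfin : ∀ n, (Γ n).FiniteIndex) (hess : ∀ n, IsEssentialPeriodGroup x (Γ n))
    (hcover : (⋃ n, Per x (Γ n)) = Set.univ) (n : ℕ)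
    {z : G → A} (hz : z ∈ OmegaG G x) {h h' : G}
    (hh : h ∈ Sset x (Γ n) z) (hh' : h' ∈ Sset x (Γ n) z) : h' * h⁻¹ ∈ Γ n := by
  by_contra hcon
  haveI : Finite (G ⧸ Γ n) := Nat.finite_of_card_ne_zero (hfin n).index_ne_zero
  set C : G ⧸ Γ n → Set (G → A) := fun q => {w : G → A | (q.out)⁻¹ ∈ Sset x (Γ n) w}
    with hC
  set B : Set (G → A) :=
    ⋃ p ∈ {p : (G ⧸ Γ n) × (G ⧸ Γ n) | p.1 ≠ p.2}, C p.1 ∩ C p.2 with hB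
  have hBclosed : IsClosed B :=
    Set.Finite.isClosed_biUnion (Set.toFinite _) fun p _ =>
      (isClosed_sset_mem x (Γ n) _).inter (isClosed_sset_mem x (Γ n) _)
  have horb : (Set.range fun u : G => u • z) ⊆ B := by
    rintro w ⟨u, rfl⟩
    have m1 : h * u⁻¹ ∈ Sset x (Γ n) (u • z) := by
      rw [sset_smul, inv_mul_cancel_right]; exact hh
    have m2 : h' * u⁻¹ ∈ Sset x (Γ n) (u • z) := by
      rw [sset_smul, inv_mul_cancel_right]; exact hh'
    refine Set.mem_biUnion
      (show ((QuotientGroup.mk (h * u⁻¹)⁻¹ : G ⧸ Γ n), QuotientGroup.mk (h' * u⁻¹)⁻¹) ∈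
        {p : (G ⧸ Γ n) × (G ⧸ Γ n) | p.1 ≠ p.2} from ?_)
      ⟨sset_out_mem m1, sset_out_mem m2⟩
    intro heq
    apply hcon
    have h2 : ((h * u⁻¹)⁻¹)⁻¹ * (h' * u⁻¹)⁻¹ ∈ Γ n := QuotientGroup.eq.mp heq
    have h3 : ((h * u⁻¹)⁻¹)⁻¹ * (h' * u⁻¹)⁻¹ = (h' * h⁻¹)⁻¹ := by group
    rw [h3] at h2
    exact (inv_mem_iff).mp h2
  have hxB : x ∈ B :=
    closure_minimal horb hBclosed (reach hdec hfin hess hcover hz)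
  obtain ⟨p, hpne, hp1, hp2⟩ := Set.mem_iUnion₂.mp hxB
  have e : ∀ q : G ⧸ Γ n, (q.out)⁻¹ ∈ Sset x (Γ n) x → q = QuotientGroup.mk (1 : G) := by
    intro q hq
    have h1 : (q.out)⁻¹ ∈ Γ n := by
      rw [sset_self_eq (hess n)] at hq; exact hq
    calc q = QuotientGroup.mk q.out := (QuotientGroup.out_eq' q).symm
      _ = QuotientGroup.mk (1 : G) := QuotientGroup.eq.mpr (by simpa using h1)
  exact hpne ((e p.1 hp1).trans (e p.2 hp2).symm)

end AuxLemmas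

instance discreteTopology_quot {G : Type*} [Group G] [TopologicalSpace G] [DiscreteTopology G]
    (Δ : Subgroup G) : DiscreteTopology (G ⧸ Δ) :=
  discreteTopology_iff_isOpen_singleton.mpr fun _ => isOpen_coinduced.mpr (isOpen_discrete _)

/-- Proposition `eqfactor`: if `(Γₙ)` is a period structure of the
Toeplitz array `x`, then there is an almost 1-1 factor map `π : Ω_G(x) → ←G` with
`π⁻¹(e) = {x}`; consequently the subodometer `←G` is the maximal equicontinuous factor
of `(Ω_G(x), G)`. -/
theorem statement18 {G A : Type*} [Group G] [Group.FG G] [TopologicalSpace G]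
    [DiscreteTopology G] [Finite A] [TopologicalSpace A] [DiscreteTopology A]
    (x : G → A) (hx : IsToeplitz x)
    (Γ : ℕ → Subgroup G) (hdec : ∀ n, Γ (n + 1) ≤ Γ n) (hfin : ∀ n, (Γ n).FiniteIndex)
    (hess : ∀ n, IsEssentialPeriodGroup x (Γ n))
    (hcover : (⋃ n, Per x (Γ n)) = Set.univ) :
    ∃ π : OmegaSub G x → Subodometer Γ,
      IsFactorMap G π ∧
      π ⁻¹' {odoE Γ hdec} = {(⟨x, self_mem_omegaG G x⟩ : OmegaSub G x)} ∧
      ∀ (Y : Type) (_ : MetricSpace Y) (_ : MulAction G Y),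
        (∀ g : G, Continuous fun y : Y => g • y) →
        IsEquicontinuousSystem G Y →
        ∀ q : OmegaSub G x → Y, IsFactorMap G q →
          ∃ ψ : Subodometer Γ → Y, IsFactorMap G ψ ∧ ψ ∘ π = q := by
  classical
  have hΓle : ∀ {n m : ℕ}, n ≤ m → Γ m ≤ Γ n := fun {n m} h =>
    antitone_nat_of_succ_le hdec h
  haveI hdisc : ∀ n, DiscreteTopology (G ⧸ Γ n) := fun n => discreteTopology_quot (Γ n)
  haveI hfinq : ∀ n, Finite (G ⧸ Γ n) := fun n =>
    Nat.finite_of_card_ne_zero (hfin n).index_ne_zero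
  -- nonemptiness and choice of representatives
  have hne : ∀ (n : ℕ) (z : OmegaSub G x), (Sset x (Γ n) z.1).Nonempty :=
    fun n z => sset_nonempty (hfin n) (hess n) z.2
  set pk : ℕ → OmegaSub G x → G := fun n z => (hne n z).some with hpkdef
  have hpk : ∀ n z, pk n z ∈ Sset x (Γ n) z.1 := fun n z => (hne n z).some_mem
  set pi0 : OmegaSub G x → ∀ i, G ⧸ Γ i :=
    fun z i => QuotientGroup.mk (pk i z)⁻¹ with hpi0def
  have hWD : ∀ (n : ℕ) (z : OmegaSub G x) (h : G), h ∈ Sset x (Γ n) z.1 →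
      pi0 z n = QuotientGroup.mk h⁻¹ := by
    intro n z h hh
    show (QuotientGroup.mk (pk n z)⁻¹ : G ⧸ Γ n) = QuotientGroup.mk h⁻¹
    rw [QuotientGroup.eq, inv_inv]
    exact sset_unique hdec hfin hess hcover n z.2 hh (hpk n z)
  have hcompat : ∀ z, Compat Γ (pi0 z) := by
    intro z i g hg
    have hg' : (QuotientGroup.mk g : G ⧸ Γ (i + 1)) =
        QuotientGroup.mk (pk (i + 1) z)⁻¹ := hg
    rw [QuotientGroup.eq] at hg'
    have h1 : g⁻¹ ∈ Sset x (Γ (i + 1)) z.1 := by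
      have h2 : g⁻¹ = (g⁻¹ * (pk (i + 1) z)⁻¹) * pk (i + 1) z := by group
      rw [h2]
      exact mem_sset_gamma hg' (hpk (i + 1) z)
    have h3 : g⁻¹ ∈ Sset x (Γ i) z.1 := sset_anti (hdec i) h1
    have h4 := hWD i z g⁻¹ h3
    show (QuotientGroup.mk g : G ⧸ Γ i) = pi0 z i
    rw [h4, inv_inv]
  set Pi : OmegaSub G x → Subodometer Γ := fun z => ⟨pi0 z, hcompat z⟩ with hPidef
  -- equivariance
  have heqv0 : ∀ (u : G) (z : OmegaSub G x) (n : ℕ), pi0 (u • z) n = u • pi0 z n := by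
    intro u z n
    have h1 : pk n z * u⁻¹ ∈ Sset x (Γ n) (u • z).1 := by
      show pk n z * u⁻¹ ∈ Sset x (Γ n) (u • z.1)
      rw [sset_smul, inv_mul_cancel_right]
      exact hpk n z
    rw [hWD n (u • z) _ h1, hWD n z _ (hpk n z)]
    rw [mul_inv_rev, inv_inv]
    rfl
  have hPieqv : ∀ (g : G) (z : OmegaSub G x), Pi (g • z) = g • Pi z := by
    intro g z
    apply Subtype.ext
    funext n
    exact heqv0 g z n
  -- continuity
  have hfib : ∀ (n : ℕ) (q : G ⧸ Γ n), {z : OmegaSub G x | pi0 z n = q} =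
      Subtype.val ⁻¹' {w : G → A | (q.out)⁻¹ ∈ Sset x (Γ n) w} := by
    intro n q
    ext z
    simp only [Set.mem_setOf_eq, Set.mem_preimage]
    constructor
    · intro hz
      have h1 : (QuotientGroup.mk q.out : G ⧸ Γ n) = QuotientGroup.mk (pk n z)⁻¹ := by
        rw [QuotientGroup.out_eq', ← hz]
      rw [QuotientGroup.eq] at h1
      have h2 : (q.out)⁻¹ = ((q.out)⁻¹ * (pk n z)⁻¹) * pk n z := by group
      rw [h2]
      exact mem_sset_gamma h1 (hpk n z)
    · intro hz
      rw [hWD n z _ hz, inv_inv]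
      exact QuotientGroup.out_eq' q
  have hcont0 : ∀ n, Continuous fun z : OmegaSub G x => pi0 z n := by
    intro n
    rw [continuous_discrete_rng]
    intro q
    rw [show (fun z : OmegaSub G x => pi0 z n) ⁻¹' {q} = {z | pi0 z n = q} from rfl,
      ← isClosed_compl_iff]
    have hcmpl : {z : OmegaSub G x | pi0 z n = q}ᶜ =
        ⋃ q' ∈ ({q}ᶜ : Set (G ⧸ Γ n)), {z : OmegaSub G x | pi0 z n = q'} := by
      ext z
      simp only [Set.mem_compl_iff, Set.mem_setOf_eq, Set.mem_iUnion,
        Set.mem_singleton_iff]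
      exact ⟨fun h => ⟨pi0 z n, h, rfl⟩, fun ⟨q', hne', he⟩ => he ▸ hne'⟩
    rw [hcmpl]
    exact Set.Finite.isClosed_biUnion (Set.toFinite _) fun q' _ =>
      (hfib n q') ▸ ((isClosed_sset_mem x (Γ n) _).preimage continuous_subtype_val)
  have hPicont : Continuous Pi :=
    Continuous.subtype_mk (continuous_pi hcont0) _
  -- compactness
  haveI : CompactSpace (OmegaSub G x) :=
    isCompact_iff_compactSpace.mp (isClosed_closure.isCompact)
  -- x-point value
  have hx1 : ∀ n, pi0 ⟨x, self_mem_omegaG G x⟩ n = QuotientGroup.mk (1 : G) := by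
    intro n
    rw [hWD n ⟨x, self_mem_omegaG G x⟩ 1 (sset_self_sub (one_mem _)), inv_one]
  -- range contains the image of τ
  have hτrange : ∀ u : G, odoTau Γ hdec u ∈ Set.range Pi := by
    intro u
    let xpt : OmegaSub G x := ⟨x, self_mem_omegaG G x⟩
    refine ⟨u • xpt, ?_⟩
    apply Subtype.ext
    funext n
    show pi0 (u • xpt) n = QuotientGroup.mk u
    rw [heqv0, hx1]
    show (QuotientGroup.mk (u * 1) : G ⧸ Γ n) = QuotientGroup.mk u
    rw [mul_one]
  -- density of τ(G)
  have hdense : ∀ y : Subodometer Γ, y ∈ closure (Set.range (odoTau Γ hdec)) := by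
    intro y
    rw [mem_closure_iff]
    intro O hO hyO
    obtain ⟨U, hU, hOU⟩ := isOpen_induced_iff.mp hO
    have hyU : y.1 ∈ U := by rw [← hOU] at hyO; exact hyO
    obtain ⟨I, V, hV, hsub⟩ := isOpen_pi_iff.mp hU y.1 hyU
    set N := I.sup id with hN
    set u := (y.1 N).out with hu
    have hkey : ∀ k, (QuotientGroup.mk u : G ⧸ Γ (N - k)) = y.1 (N - k) := by
      intro k
      induction k with
      | zero =>
        simp only [Nat.sub_zero]
        exact QuotientGroup.out_eq' _
      | succ k ih =>
        by_cases hk : N ≤ k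
        · have e1 : N - (k + 1) = N - k := by omega
          rw [e1]; exact ih
        · have e2 : N - k = (N - (k + 1)) + 1 := by omega
          rw [e2] at ih
          exact y.2 (N - (k + 1)) u ih
    have hmem : ∀ i, i ≤ N → (QuotientGroup.mk u : G ⧸ Γ i) = y.1 i := by
      intro i hi
      have := hkey (N - i)
      rwa [Nat.sub_sub_self hi] at this
    refine ⟨odoTau Γ hdec u, ?_, ⟨u, rfl⟩⟩
    rw [← hOU]
    apply hsub
    intro i hi
    have h1 : (odoTau Γ hdec u).1 i = y.1 i := hmem i (Finset.le_sup (f := id) hi)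
    show (odoTau Γ hdec u).1 i ∈ V i
    rw [h1]
    exact (hV i hi).2
  haveI : T2Space (Subodometer Γ) :=
    inferInstanceAs (T2Space {y : ∀ i, G ⧸ Γ i // Compat Γ y})
  -- surjectivity
  have hsurj : Function.Surjective Pi := by
    intro y
    have h2 : IsClosed (Set.range Pi) := (isCompact_range hPicont).isClosed
    have h3 : Set.range (odoTau Γ hdec) ⊆ Set.range Pi := by
      rintro _ ⟨u, rfl⟩; exact hτrange u
    exact (h2.closure_subset_iff.mpr h3) (hdense y)
  -- the fiber over e
  have hfiberE : Pi ⁻¹' {odoE Γ hdec} = {(⟨x, self_mem_omegaG G x⟩ : OmegaSub G x)} := by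
    ext z
    simp only [Set.mem_preimage, Set.mem_singleton_iff]
    constructor
    · intro hz
      apply Subtype.ext
      funext g
      have hone : ∀ n, (1 : G) ∈ Sset x (Γ n) z.1 := by
        intro n
        have h1 : (QuotientGroup.mk (pk n z)⁻¹ : G ⧸ Γ n) = QuotientGroup.mk (1 : G) :=
          congrFun (congrArg Subtype.val hz) n
        rw [QuotientGroup.eq, inv_inv, mul_one] at h1
        have h4 : (1 : G) = (pk n z)⁻¹ * pk n z := (inv_mul_cancel _).symm
        rw [h4]
        exact mem_sset_gamma (inv_mem h1) (hpk n z)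
      obtain ⟨n, hn⟩ := Set.mem_iUnion.mp (Set.eq_univ_iff_forall.mp hcover g)
      obtain ⟨σ, hσ⟩ := Set.mem_iUnion.mp hn
      have hxg : x g = σ := by have := hσ 1 (one_mem _); rwa [mul_one] at this
      have hzg : z.1 g = σ := by
        have := hone n σ g hσ 1 (one_mem _)
        rwa [mul_one, mul_one] at this
      show z.1 g = x g
      rw [hzg, hxg]
    · rintro rfl
      apply Subtype.ext
      funext n
      exact hx1 n
  refine ⟨Pi, ⟨hPicont, hsurj, hPieqv⟩, hfiberE, ?_⟩
  intro Y _ _ hcontY heqY qmap hq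
  -- q is constant on fibers of Pi
  have hconst : ∀ z z' : OmegaSub G x, Pi z = Pi z' → qmap z = qmap z' := by
    intro z z' hzz
    by_contra hne'
    have hd : 0 < dist (qmap z) (qmap z') := dist_pos.mpr hne'
    obtain ⟨δ, hδ, hδe⟩ := heqY (dist (qmap z) (qmap z')) hd
    have hcom : ∀ n, pk n z' ∈ Sset x (Γ n) z.1 := by
      intro n
      have h1 : (QuotientGroup.mk (pk n z)⁻¹ : G ⧸ Γ n) =
          QuotientGroup.mk (pk n z')⁻¹ := congrFun (congrArg Subtype.val hzz) n
      rw [QuotientGroup.eq, inv_inv] at h1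
      have h3 : pk n z' = (pk n z * (pk n z')⁻¹)⁻¹ * pk n z := by group
      rw [h3]
      exact mem_sset_gamma (inv_mem h1) (hpk n z)
    have hlim : ∀ v : OmegaSub G x, (∀ n, pk n z' ∈ Sset x (Γ n) v.1) →
        Filter.Tendsto (fun n => qmap ((pk n z') • v)) Filter.atTop
          (nhds (qmap ⟨x, self_mem_omegaG G x⟩)) := by
      intro v hv
      have hto : Filter.Tendsto (fun n => (pk n z') • v) Filter.atTop
          (nhds (⟨x, self_mem_omegaG G x⟩ : OmegaSub G x)) := by
        refine tendsto_subtype_rng.mpr ?_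
        rw [tendsto_pi_nhds]
        intro g
        obtain ⟨m, hm⟩ := Set.mem_iUnion.mp (Set.eq_univ_iff_forall.mp hcover g)
        obtain ⟨σ, hσ⟩ := Set.mem_iUnion.mp hm
        have hxg : x g = σ := by have := hσ 1 (one_mem _); rwa [mul_one] at this
        refine Filter.Tendsto.congr' ?_ tendsto_const_nhds
        rw [Filter.eventuallyEq_iff_exists_mem]
        refine ⟨{n | m ≤ n}, Filter.mem_atTop m, fun n hn => ?_⟩
        have hσn : g ∈ PerSet x (Γ n) σ := perSet_anti (hΓle hn) hσ
        have := hv n σ g hσn 1 (one_mem _)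
        rw [mul_one] at this
        show x g = (((pk n z') • v : OmegaSub G x)).1 g
        rw [hxg]
        exact this.symm
      exact (hq.1.tendsto _).comp hto
    have hl1 := hlim z hcom
    have hl2 := hlim z' (fun n => hpk n z')
    have hdist : Filter.Tendsto
        (fun n => dist (qmap ((pk n z') • z)) (qmap ((pk n z') • z')))
        Filter.atTop (nhds 0) := by
      have := hl1.dist hl2
      simpa [dist_self] using this
    obtain ⟨n, hn⟩ := (hdist.eventually (gt_mem_nhds hδ)).exists
    have hkey := hδe _ _ hn (pk n z')⁻¹
    have e1 : (pk n z')⁻¹ • qmap ((pk n z') • z) = qmap z := by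
      rw [← hq.2.2, inv_smul_smul]
    have e2 : (pk n z')⁻¹ • qmap ((pk n z') • z') = qmap z' := by
      rw [← hq.2.2, inv_smul_smul]
    rw [e1, e2] at hkey
    exact lt_irrefl _ hkey
  -- build ψ
  have hqm : Topology.IsQuotientMap Pi :=
    (hPicont.isClosedMap).isQuotientMap hPicont hsurj
  choose sec hsec using hsurj
  have hcomp : (fun ω => qmap (sec ω)) ∘ Pi = qmap := by
    funext z
    exact hconst (sec (Pi z)) z (hsec (Pi z))
  refine ⟨fun ω => qmap (sec ω), ⟨?_, ?_, ?_⟩, hcomp⟩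
  · rw [hqm.continuous_iff, hcomp]
    exact hq.1
  · intro y
    obtain ⟨z, hz⟩ := hq.2.1 y
    exact ⟨Pi z, (hconst (sec (Pi z)) z (hsec (Pi z))).trans hz⟩
  · intro g ω
    show qmap (sec (g • ω)) = g • qmap (sec ω)
    have h1 : Pi (g • sec ω) = g • ω := by rw [hPieqv, hsec]
    have h2 : qmap (sec (g • ω)) = qmap (g • sec ω) :=
      hconst _ _ (by rw [hsec, h1])
    rw [h2, hq.2.2]
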